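/- Let n be a positive odd integer and δ a primitive 3n-th root of unity in an extension L of F_4 with δ^n = ω. Suppose A, A' ⊆ {3k+1 : 0 ≤ k ≤ n−1}, g(x) = ∏_{i∈A}(x−δ^i), h(x) = ∏_{i∈A'}(x−δ^i), and 1 ≤ j ≤ n satisfies n | 3j·|A| and φ_{3j}(A) = A' (shift modulo 3n). Then the substitution map Θ(f(x)) = f(δ^{−3j} x) on L[x]/⟨x^n − ω⟩ is a well-defined ring automorphism, and Θ(g(x)) = a·h(x) where a = δ^{−3j|A|} ∈ F_4. -/

import Mathlib

open Polynomial

lemma lift_exists {L : Type*} [Field L] (n : ℕ) (ω c : L) (hc : c ^ n = 1) :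
    ∃ f : (L[X] ⧸ Ideal.span {(X : L[X]) ^ n - C ω}) →ₐ[L]
        (L[X] ⧸ Ideal.span {(X : L[X]) ^ n - C ω}),
      ∀ p : L[X], f (Ideal.Quotient.mk _ p) = Ideal.Quotient.mk _ (aeval (C c * X) p) := by
  set I := Ideal.span {(X : L[X]) ^ n - C ω} with hI
  have h0 : aeval (C c * X) ((X : L[X]) ^ n - C ω) = X ^ n - C ω := by
    rw [map_sub, map_pow, aeval_X, aeval_C, mul_pow, ← C_pow, hc, map_one, one_mul,
      Polynomial.algebraMap_eq]
  have hker : ∀ p ∈ I, ((Ideal.Quotient.mkₐ L I).comp (aeval (C c * X))) p = 0 := by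
    intro p hp
    rw [hI, Ideal.mem_span_singleton] at hp
    obtain ⟨q, rfl⟩ := hp
    rw [AlgHom.comp_apply, map_mul, h0, map_mul, Ideal.Quotient.mkₐ_eq_mk,
      show Ideal.Quotient.mk I (X ^ n - C ω) = 0 by
        rw [Ideal.Quotient.eq_zero_iff_mem, hI]; exact Ideal.subset_span rfl,
      zero_mul]
  refine ⟨Ideal.Quotient.liftₐ I ((Ideal.Quotient.mkₐ L I).comp (aeval (C c * X))) hker,
    fun p => ?_⟩
  simp [Ideal.Quotient.liftₐ_apply]
  rfl

/-- `n` odd, `δ` a primitive 3n-th root of unity in `L ⊇ F_4` (char 2) with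
`δ^n = ω`. With defining sets `A, A' ⊆ {3k+1}`, `g = ∏_{i∈A}(X-δ^i)`, `h = ∏_{i∈A'}(X-δ^i)`,
`1 ≤ j ≤ n`, `n ∣ 3j·|A|`, and the shift by `3j` mapping `A` onto `A'`, the substitution
`Θ(f(x)) = f(δ^{-3j}x)` is a well-defined algebra automorphism of `L[x]/⟨x^n - ω⟩` (sending
the class of `x` to the class of `δ^{-3j}x`) with `Θ(g) = a·h` where `a = δ^{-3j|A|} ∈ F_4`. -/
theorem substitution_automorphism (n : ℕ) (hnodd : Odd n) (hn : 0 < n)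
    (L : Type*) [Field L] [CharP L 2] (ω : L) (hω : ω ^ 2 = ω + 1)
    (δ : L) (hδ : IsPrimitiveRoot δ (3 * n)) (hδn : δ ^ n = ω)
    (A A' : Finset ℕ)
    (hA : ∀ x ∈ A, x % 3 = 1 ∧ x < 3 * n)
    (hA' : ∀ x ∈ A', x % 3 = 1 ∧ x < 3 * n)
    (j : ℕ) (hj1 : 1 ≤ j) (hj2 : j ≤ n) (hdiv : n ∣ 3 * j * A.card)
    (hshift : A.image (fun x => (x + 3 * j) % (3 * n)) = A') :
    ∃ Θ : (L[X] ⧸ Ideal.span {(X : L[X]) ^ n - C ω}) ≃ₐ[L]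
        (L[X] ⧸ Ideal.span {(X : L[X]) ^ n - C ω}),
      Θ (Ideal.Quotient.mk _ X) = Ideal.Quotient.mk _ (C ((δ ^ (3 * j))⁻¹) * X) ∧
      Θ (Ideal.Quotient.mk _ (∏ i ∈ A, (X - C (δ ^ i)))) =
        Ideal.Quotient.mk _ (C ((δ ^ (3 * j * A.card))⁻¹) * ∏ i ∈ A', (X - C (δ ^ i))) ∧
      ((δ ^ (3 * j * A.card))⁻¹) ^ 4 = (δ ^ (3 * j * A.card))⁻¹ := by
  set I := Ideal.span {(X : L[X]) ^ n - C ω} with hI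
  have h3n : δ ^ (3 * n) = 1 := hδ.pow_eq_one
  have hδ0 : δ ≠ 0 := hδ.ne_zero (by positivity)
  set u : L := δ ^ (3 * j) with hu
  have hu0 : u ≠ 0 := pow_ne_zero _ hδ0
  have hun : u ^ n = 1 := by
    rw [hu, ← pow_mul, show 3 * j * n = 3 * n * j by ring, pow_mul, h3n, one_pow]
  have huinv : u⁻¹ ^ n = 1 := by rw [inv_pow, hun, inv_one]
  obtain ⟨f, hf⟩ := lift_exists n ω u⁻¹ huinv
  obtain ⟨g, hg⟩ := lift_exists n ω u hun
  -- compositions are identity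
  have hcomp : ∀ (a b : L) (F G : (L[X] ⧸ I) →ₐ[L] (L[X] ⧸ I)),
      (∀ p : L[X], F (Ideal.Quotient.mk _ p) = Ideal.Quotient.mk _ (aeval (C a * X) p)) →
      (∀ p : L[X], G (Ideal.Quotient.mk _ p) = Ideal.Quotient.mk _ (aeval (C b * X) p)) →
      a * b = 1 → F.comp G = AlgHom.id L _ := by
    intro a b F G hF hG hab
    apply Ideal.Quotient.algHom_ext
    apply Polynomial.algHom_ext
    simp only [AlgHom.comp_apply, Ideal.Quotient.mkₐ_eq_mk, AlgHom.id_apply]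
    rw [hG, aeval_X, hF, map_mul, aeval_C, aeval_X, Polynomial.algebraMap_eq,
      ← mul_assoc, ← C_mul, mul_comm b a, hab, map_one, one_mul]
  have hfg : f.comp g = AlgHom.id L _ := hcomp u⁻¹ u f g hf hg (inv_mul_cancel₀ hu0)
  have hgf : g.comp f = AlgHom.id L _ := hcomp u u⁻¹ g f hg hf (mul_inv_cancel₀ hu0)
  refine ⟨AlgEquiv.ofAlgHom f g hfg hgf, ?_, ?_, ?_⟩
  · show f (Ideal.Quotient.mk I X) = _
    rw [hf, aeval_X]
  · show f (Ideal.Quotient.mk I _) = _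
    rw [hf]
    congr 1
    rw [map_prod]
    have hinj : ∀ x ∈ A, ∀ y ∈ A, (x + 3 * j) % (3 * n) = (y + 3 * j) % (3 * n) → x = y := by
      intro x hx y hy hxy
      have := Nat.ModEq.add_right_cancel' (3 * j) (hxy : x + 3*j ≡ y + 3*j [MOD 3*n])
      rwa [Nat.ModEq, Nat.mod_eq_of_lt (hA x hx).2, Nat.mod_eq_of_lt (hA y hy).2] at this
    rw [← hshift, Finset.prod_image hinj]
    have hterm : ∀ i ∈ A, aeval (C u⁻¹ * X) ((X : L[X]) - C (δ ^ i))
        = C u⁻¹ * (X - C (δ ^ ((i + 3 * j) % (3 * n)))) := by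
      intro i hi
      rw [map_sub, aeval_X, aeval_C, Polynomial.algebraMap_eq, mul_sub]
      congr 1
      rw [← C_mul, ← pow_eq_pow_mod _ h3n, pow_add, mul_comm (δ ^ i), ← hu,
        ← mul_assoc, inv_mul_cancel₀ hu0, one_mul]
    rw [Finset.prod_congr rfl hterm, Finset.prod_mul_distrib, Finset.prod_const,
      ← C_pow, hu, inv_pow, ← pow_mul]
  · obtain ⟨k, hk⟩ := hdiv
    have h3 : (δ ^ (3 * j * A.card)) ^ 3 = 1 := by
      rw [hk, ← pow_mul, show n * k * 3 = 3 * n * k by ring, pow_mul, h3n, one_pow]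
    have : ((δ ^ (3 * j * A.card))⁻¹) ^ 3 = 1 := by rw [inv_pow, h3, inv_one]
    calc ((δ ^ (3 * j * A.card))⁻¹) ^ 4
        = ((δ ^ (3 * j * A.card))⁻¹) ^ 3 * (δ ^ (3 * j * A.card))⁻¹ := by ring
      _ = (δ ^ (3 * j * A.card))⁻¹ := by rw [this, one_mul]
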